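/- Let U be a finite bounded poset with p = min {p' : U embeds into P([p'])}, and let k ≥ 1. Then Sp*(U,k) = p + B*(k), where Sp*(U,k) = min {n : k pairwise unrelated copies of U embed into P([n])} and B*(k) = min {n : k ≤ C(n, ⌊n/2⌋)}. -/

import Mathlib

open Finset

/-- An equiv of types induces an order iso of set lattices. -/
def setCongrIso {α β : Type*} (e : α ≃ β) : Set α ≃o Set β where
  toFun s := e '' s
  invFun s := e.symm '' s
  left_inv s := by simp [Set.image_image]
  right_inv s := by simp [Set.image_image]
  map_rel_iff' := Set.image_subset_image_iff e.injective

/-- Any partial order embeds into its powerset. -/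
def downsetEmb (α : Type*) [PartialOrder α] : α ↪o Set α :=
  OrderEmbedding.ofMapLEIff (fun a => {x | x ≤ a}) (by
    intro a b
    constructor
    · intro h; exact h (le_refl a)
    · intro h x hx; exact le_trans hx h)

noncomputable def finEmb (α : Type*) [PartialOrder α] [Fintype α] :
    α ↪o Set (Fin (Fintype.card α)) :=
  (downsetEmb α).trans (setCongrIso (Fintype.equivFin α)).toOrderEmbedding


variable {n : ℕ}

/-- canonical order iso from `Fin s.card` to a finset. -/
noncomputable def rkIso (V : Finset (Fin n)) : Fin V.card ≃o ↥V := V.orderIsoOfFin rfl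

lemma rkIso_val_congr {V₁ V₂ : Finset (Fin n)} (h : V₁ = V₂) {i₁ : Fin V₁.card}
    {i₂ : Fin V₂.card} (hv : (i₁ : ℕ) = (i₂ : ℕ)) :
    (rkIso V₁ i₁ : Fin n) = (rkIso V₂ i₂ : Fin n) := by
  subst h; exact congrArg (fun i => ((rkIso V₁ i : ↥V₁) : Fin n)) (Fin.ext hv)

lemma rkIso_val_inj {V₁ V₂ : Finset (Fin n)} (h : V₁ = V₂) {i₁ : Fin V₁.card}
    {i₂ : Fin V₂.card} (hv : (rkIso V₁ i₁ : Fin n) = (rkIso V₂ i₂ : Fin n)) :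
    (i₁ : ℕ) = (i₂ : ℕ) := by
  subst h
  have := (rkIso V₁).injective (Subtype.coe_injective hv)
  exact congrArg Fin.val this

lemma rkIso_symm_inj {V₁ V₂ : Finset (Fin n)} (h : V₁ = V₂) {x₁ x₂ : Fin n}
    {m₁ : x₁ ∈ V₁} {m₂ : x₂ ∈ V₂}
    (hv : (((rkIso V₁).symm ⟨x₁, m₁⟩ : Fin V₁.card) : ℕ)
        = (((rkIso V₂).symm ⟨x₂, m₂⟩ : Fin V₂.card) : ℕ)) : x₁ = x₂ := by
  subst h
  have : (rkIso V₁).symm ⟨x₁, m₁⟩ = (rkIso V₁).symm ⟨x₂, m₂⟩ := Fin.ext hv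
  have h2 := (rkIso V₁).symm.injective this
  exact congrArg Subtype.val h2

lemma rkIso_lt {V : Finset (Fin n)} {i j : Fin V.card} (h : (i : ℕ) < (j : ℕ)) :
    (rkIso V i : Fin n) < (rkIso V j : Fin n) :=
  Subtype.coe_lt_coe.2 ((rkIso V).strictMono (Fin.lt_def.2 h))

section Count

variable (X Y : Finset (Fin n))

/-- the permutations separating `X` below `Y`. -/
def good : Finset (Equiv.Perm (Fin n)) :=
  univ.filter fun π => ∀ x ∈ X, ∀ y ∈ Y, π x < π y

lemma cardV' (hd : Disjoint X Y) (π : Equiv.Perm (Fin n)) : ((X ∪ Y).image ⇑π).card = (X.image ⇑π).card + (Y.image ⇑π).card := by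
  rw [image_union]
  rw [card_union_of_disjoint]
  rw [disjoint_left]
  rintro a ha hb
  obtain ⟨x, hx, rfl⟩ := mem_image.1 ha
  obtain ⟨y, hy, hxy⟩ := mem_image.1 hb
  cases π.injective hxy
  exact (disjoint_left.1 hd hx) hy

lemma mem_V_iff (π : Equiv.Perm (Fin n)) (z : Fin n) : π z ∈ (X ∪ Y).image ⇑π ↔ z ∈ X ∪ Y := by
  constructor
  · intro h
    obtain ⟨u, hu, huz⟩ := mem_image.1 h
    cases π.injective huz; exact hu
  · exact fun h => mem_image_of_mem _ h

noncomputable def sortFun (hd : Disjoint X Y) (π : Equiv.Perm (Fin n)) : Fin n → Fin n := fun z =>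
  if hz : z ∈ X then
    ↑(rkIso ((X ∪ Y).image ⇑π)
      ⟨(((rkIso (X.image ⇑π)).symm ⟨π z, mem_image_of_mem _ hz⟩ : Fin _) : ℕ),
        Nat.lt_of_lt_of_le (Fin.isLt _)
          (card_le_card (image_subset_image subset_union_left))⟩)
  else if hz' : z ∈ Y then
    ↑(rkIso ((X ∪ Y).image ⇑π)
      ⟨(X.image ⇑π).card
          + (((rkIso (Y.image ⇑π)).symm ⟨π z, mem_image_of_mem _ hz'⟩ : Fin _) : ℕ),
        by rw [cardV' X Y hd π]; exact Nat.add_lt_add_left (Fin.isLt _) _⟩)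
  else π z


lemma sortFun_injective (hd : Disjoint X Y) (π : Equiv.Perm (Fin n)) :
    Function.Injective (sortFun X Y hd π) := by
  intro z₁ z₂ h
  unfold sortFun at h
  split_ifs at h with h₁ h₂ h₃ h₄ h₅ h₆ h₇ h₈
  -- X X
  · have h' := rkIso_val_inj rfl h
    exact π.injective (rkIso_symm_inj rfl h')
  -- X Y
  · have h' := rkIso_val_inj rfl h
    simp only [Fin.val_mk] at h'
    have hlt := Fin.isLt ((rkIso (X.image ⇑π)).symm ⟨π z₁, mem_image_of_mem _ h₁⟩)
    omega
  -- X out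
  · exact absurd ((mem_V_iff X Y π z₂).1 (h ▸ (rkIso _ _).2)) (by simp [h₂, h₃])
  -- Y X
  · have h' := rkIso_val_inj rfl h
    simp only [Fin.val_mk] at h'
    have hlt := Fin.isLt ((rkIso (X.image ⇑π)).symm ⟨π z₂, mem_image_of_mem _ h₅⟩)
    omega
  -- Y Y
  · have h' := rkIso_val_inj rfl h
    simp only [Fin.val_mk, Nat.add_right_inj] at h'
    exact π.injective (rkIso_symm_inj rfl h')
  -- Y out
  · exact absurd ((mem_V_iff X Y π z₂).1 (h ▸ (rkIso _ _).2)) (by simp [h₅, h₆])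
  -- out X
  · exact absurd ((mem_V_iff X Y π z₁).1 (h.symm ▸ (rkIso _ _).2)) (by simp [h₁, h₄])
  -- out Y
  · exact absurd ((mem_V_iff X Y π z₁).1 (h.symm ▸ (rkIso _ _).2)) (by simp [h₁, h₄])
  -- out out
  · exact π.injective h

noncomputable def sortPerm (hd : Disjoint X Y) (π : Equiv.Perm (Fin n)) : Equiv.Perm (Fin n) :=
  Equiv.ofBijective _ (Finite.injective_iff_bijective.mp (sortFun_injective X Y hd π))

lemma sortPerm_apply (hd : Disjoint X Y) (π : Equiv.Perm (Fin n)) (z : Fin n) :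
    sortPerm X Y hd π z = sortFun X Y hd π z := rfl

lemma sortPerm_mem_good (hd : Disjoint X Y) (π : Equiv.Perm (Fin n)) :
    sortPerm X Y hd π ∈ good X Y := by
  rw [good, mem_filter]
  refine ⟨mem_univ _, fun x hx y hy => ?_⟩
  have hyx : y ∉ X := disjoint_right.1 hd hy
  rw [sortPerm_apply, sortPerm_apply]
  unfold sortFun
  rw [dif_pos hx, dif_neg hyx, dif_pos hy]
  refine rkIso_lt ?_
  simp only [Fin.val_mk]
  have hlt := Fin.isLt ((rkIso (X.image ⇑π)).symm ⟨π x, mem_image_of_mem _ hx⟩)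
  omega

lemma rkIso_symm_val_congr {V₁ V₂ : Finset (Fin n)} (h : V₁ = V₂) {x : Fin n}
    (m₁ : x ∈ V₁) (m₂ : x ∈ V₂) :
    (((rkIso V₁).symm ⟨x, m₁⟩ : Fin V₁.card) : ℕ)
      = (((rkIso V₂).symm ⟨x, m₂⟩ : Fin V₂.card) : ℕ) := by subst h; rfl

noncomputable def pat (X Y : Finset (Fin n)) (π : Equiv.Perm (Fin n)) : Finset ℕ :=
  ((univ : Finset (Fin ((X ∪ Y).image ⇑π).card)).filter
    fun i => ↑(rkIso ((X ∪ Y).image ⇑π) i) ∈ X.image ⇑π).image Fin.val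

lemma pat_mem_iff (X Y : Finset (Fin n)) (π : Equiv.Perm (Fin n)) {x : Fin n}
    (m : x ∈ (X ∪ Y).image ⇑π) :
    x ∈ X.image ⇑π ↔
      (((rkIso ((X ∪ Y).image ⇑π)).symm ⟨x, m⟩ : Fin _) : ℕ) ∈ pat X Y π := by
  constructor
  · intro hx
    refine mem_image.2 ⟨(rkIso ((X ∪ Y).image ⇑π)).symm ⟨x, m⟩, mem_filter.2 ⟨mem_univ _, ?_⟩, rfl⟩
    simp [hx]
  · intro hx
    obtain ⟨i, hi, hval⟩ := mem_image.1 hx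
    have : i = (rkIso ((X ∪ Y).image ⇑π)).symm ⟨x, m⟩ := Fin.ext hval
    subst this
    have := (mem_filter.1 hi).2
    simpa using this

lemma pat_card (X Y : Finset (Fin n)) (π : Equiv.Perm (Fin n)) :
    (pat X Y π).card = X.card := by
  rw [pat, card_image_of_injective _ Fin.val_injective]
  rw [← card_image_of_injective X π.injective]
  apply card_bij (fun i _ => (↑(rkIso ((X ∪ Y).image ⇑π) i) : Fin n))
  · intro i hi; exact (mem_filter.1 hi).2
  · intro i hi j hj hij
    exact (rkIso _).injective (Subtype.coe_injective hij)
  · intro x hx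
    have hm : x ∈ (X ∪ Y).image ⇑π := (image_subset_image subset_union_left) hx
    refine ⟨(rkIso ((X ∪ Y).image ⇑π)).symm ⟨x, hm⟩, mem_filter.2 ⟨mem_univ _, ?_⟩, ?_⟩
    · simp [hx]
    · simp

lemma V_eq (X Y : Finset (Fin n)) (hd : Disjoint X Y) (π : Equiv.Perm (Fin n)) :
    (X ∪ Y).image ⇑(sortPerm X Y hd π) = (X ∪ Y).image ⇑π := by
  apply eq_of_subset_of_card_le
  · intro x hx
    obtain ⟨z, hz, rfl⟩ := mem_image.1 hx
    rw [sortPerm_apply]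
    unfold sortFun
    rcases mem_union.1 hz with hz' | hz'
    · rw [dif_pos hz']; exact (rkIso _ _).2
    · have hz'' : z ∉ X := disjoint_right.1 hd hz'
      rw [dif_neg hz'', dif_pos hz']; exact (rkIso _ _).2
  · rw [card_image_of_injective _ π.injective,
      card_image_of_injective _ (sortPerm X Y hd π).injective]

lemma XP_eq (X Y : Finset (Fin n)) (π₁ π₂ : Equiv.Perm (Fin n))
    (hV : (X ∪ Y).image ⇑π₁ = (X ∪ Y).image ⇑π₂) (hS : pat X Y π₁ = pat X Y π₂) :
    X.image ⇑π₁ = X.image ⇑π₂ := by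
  ext x
  constructor
  · intro hx
    have m₁ : x ∈ (X ∪ Y).image ⇑π₁ := (image_subset_image subset_union_left) hx
    have m₂ : x ∈ (X ∪ Y).image ⇑π₂ := hV ▸ m₁
    have h1 := (pat_mem_iff X Y π₁ m₁).1 hx
    rw [hS, rkIso_symm_val_congr hV m₁ m₂] at h1
    exact (pat_mem_iff X Y π₂ m₂).2 h1
  · intro hx
    have m₂ : x ∈ (X ∪ Y).image ⇑π₂ := (image_subset_image subset_union_left) hx
    have m₁ : x ∈ (X ∪ Y).image ⇑π₁ := hV ▸ m₂
    have h1 := (pat_mem_iff X Y π₂ m₂).1 hx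
    rw [← hS, ← rkIso_symm_val_congr hV m₁ m₂] at h1
    exact (pat_mem_iff X Y π₁ m₁).2 h1

lemma YP_eq (X Y : Finset (Fin n)) (hd : Disjoint X Y) (π₁ π₂ : Equiv.Perm (Fin n))
    (hV : (X ∪ Y).image ⇑π₁ = (X ∪ Y).image ⇑π₂) (hX : X.image ⇑π₁ = X.image ⇑π₂) :
    Y.image ⇑π₁ = Y.image ⇑π₂ := by
  have key : ∀ π : Equiv.Perm (Fin n),
      Y.image ⇑π = ((X ∪ Y).image ⇑π) \ (X.image ⇑π) := by
    intro π
    rw [image_union, union_sdiff_cancel_left]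
    rw [disjoint_left]
    rintro a ha hb
    obtain ⟨u, hu, rfl⟩ := mem_image.1 ha
    obtain ⟨v, hv, hvu⟩ := mem_image.1 hb
    cases π.injective hvu
    exact (disjoint_left.1 hd hu) hv
  rw [key π₁, key π₂, hV, hX]

lemma sort_inj (X Y : Finset (Fin n)) (hd : Disjoint X Y) (π₁ π₂ : Equiv.Perm (Fin n))
    (hS : pat X Y π₁ = pat X Y π₂) (hP : sortPerm X Y hd π₁ = sortPerm X Y hd π₂) :
    π₁ = π₂ := by
  have hV : (X ∪ Y).image ⇑π₁ = (X ∪ Y).image ⇑π₂ := by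
    rw [← V_eq X Y hd π₁, ← V_eq X Y hd π₂, hP]
  have hXP := XP_eq X Y π₁ π₂ hV hS
  have hYP := YP_eq X Y hd π₁ π₂ hV hXP
  have ha : (X.image ⇑π₁).card = (X.image ⇑π₂).card := by rw [hXP]
  apply Equiv.ext
  intro z
  have hz : sortFun X Y hd π₁ z = sortFun X Y hd π₂ z := by
    rw [← sortPerm_apply, ← sortPerm_apply, hP]
  unfold sortFun at hz
  by_cases h₁ : z ∈ X
  · rw [dif_pos h₁, dif_pos h₁] at hz
    have h' := rkIso_val_inj hV hz
    exact rkIso_symm_inj hXP h'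
  · by_cases h₂ : z ∈ Y
    · rw [dif_neg h₁, dif_neg h₁, dif_pos h₂, dif_pos h₂] at hz
      have h' := rkIso_val_inj hV hz
      simp only [Fin.val_mk, ha, Nat.add_right_inj] at h'
      exact rkIso_symm_inj hYP h'
    · rw [dif_neg h₁, dif_neg h₁, dif_neg h₂, dif_neg h₂] at hz
      exact hz

lemma count_sep (X Y : Finset (Fin n)) (hd : Disjoint X Y) :
    n.factorial ≤ (X.card + Y.card).choose X.card * (good X Y).card := by
  classical
  have cardVw : ∀ π : Equiv.Perm (Fin n),
      ((X ∪ Y).image ⇑π).card = X.card + Y.card := by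
    intro π
    rw [cardV' X Y hd π, card_image_of_injective _ π.injective,
      card_image_of_injective _ π.injective]
  have hinj : Set.InjOn (fun π => (pat X Y π, sortPerm X Y hd π))
      ((univ : Finset (Equiv.Perm (Fin n))) : Set (Equiv.Perm (Fin n))) := by
    intro π₁ _ π₂ _ h
    have h1 := congrArg Prod.fst h
    have h2 := congrArg Prod.snd h
    exact sort_inj X Y hd π₁ π₂ h1 h2
  have hmaps : ∀ π ∈ (univ : Finset (Equiv.Perm (Fin n))),
      (pat X Y π, sortPerm X Y hd π) ∈
        (powersetCard X.card (range (X.card + Y.card))) ×ˢ good X Y := by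
    intro π _
    rw [mem_product]
    constructor
    · rw [mem_powersetCard]
      refine ⟨?_, pat_card X Y π⟩
      intro r hr
      obtain ⟨i, _, rfl⟩ := mem_image.1 hr
      rw [mem_range]
      exact lt_of_lt_of_le i.isLt (le_of_eq (cardVw π))
    · exact sortPerm_mem_good X Y hd π
  calc n.factorial = (univ : Finset (Equiv.Perm (Fin n))).card := by
        rw [card_univ, Fintype.card_perm, Fintype.card_fin]
    _ ≤ ((powersetCard X.card (range (X.card + Y.card))) ×ˢ good X Y).card :=
        card_le_card_of_injOn _ hmaps hinj
    _ = (X.card + Y.card).choose X.card * (good X Y).card := by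
        rw [card_product, card_powersetCard, card_range]

lemma GST {n t k : ℕ} (A C : Fin k → Finset (Fin n)) (hsub : ∀ i, A i ⊆ C i)
    (hcard : ∀ i, (C i \ A i).card = t) (hunrel : ∀ i j, i ≠ j → ¬ A i ⊆ C j) :
    k ≤ (n - t).choose ((n - t) / 2) := by
  classical
  set M := (n - t).choose ((n - t) / 2) with hM
  have hd : ∀ i, Disjoint (A i) (C i)ᶜ := fun i =>
    disjoint_compl_right.mono_left (hsub i)
  have hCn : ∀ i, (C i).card ≤ n := fun i => by
    simpa using card_le_card (subset_univ (C i))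
  have hCA : ∀ i, (C i).card = (A i).card + t := fun i => by
    have h0 := hcard i
    have h1 := card_sdiff_of_subset (hsub i)
    have h2 := card_le_card (hsub i)
    omega
  have hw : ∀ i, (A i).card + ((C i)ᶜ).card = n - t := fun i => by
    have h1 : ((C i)ᶜ).card = n - (C i).card := by
      rw [card_compl, Fintype.card_fin]
    have := hCA i; have := hCn i; have h2 := card_le_card (hsub i)
    omega
  have hcount : ∀ i, n.factorial ≤ M * (good (A i) ((C i)ᶜ)).card := fun i => by
    refine le_trans (le_trans (count_sep (A i) ((C i)ᶜ) (hd i)) ?_) (le_refl _)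
    apply Nat.mul_le_mul_right
    rw [hw i, hM]
    exact Nat.choose_le_middle _ _
  have hdisj : ∀ i ∈ (univ : Finset (Fin k)), ∀ j ∈ (univ : Finset (Fin k)), i ≠ j →
      Disjoint (good (A i) ((C i)ᶜ)) (good (A j) ((C j)ᶜ)) := by
    intro i _ j _ hij
    rw [disjoint_left]
    intro π hi hj
    obtain ⟨x, hxA, hxC⟩ := not_subset.1 (hunrel i j hij)
    obtain ⟨y, hyA, hyC⟩ := not_subset.1 (hunrel j i hij.symm)
    have h1 := (mem_filter.1 hi).2 x hxA y (mem_compl.2 hyC)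
    have h2 := (mem_filter.1 hj).2 y hyA x (mem_compl.2 hxC)
    exact absurd h2 (lt_asymm h1)
  have hsum : ∑ i : Fin k, (good (A i) ((C i)ᶜ)).card ≤ n.factorial := by
    rw [← card_biUnion hdisj]
    calc ((univ : Finset (Fin k)).biUnion fun i => good (A i) ((C i)ᶜ)).card
        ≤ (univ : Finset (Equiv.Perm (Fin n))).card := card_le_card (subset_univ _)
      _ = n.factorial := by rw [card_univ, Fintype.card_perm, Fintype.card_fin]
  have hkn : k * n.factorial ≤ M * n.factorial := by
    calc k * n.factorial = ∑ _i : Fin k, n.factorial := by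
          rw [Finset.sum_const, card_univ, Fintype.card_fin, smul_eq_mul]
      _ ≤ ∑ i : Fin k, M * (good (A i) ((C i)ᶜ)).card := Finset.sum_le_sum fun i _ => hcount i
      _ = M * ∑ i : Fin k, (good (A i) ((C i)ᶜ)).card := by rw [Finset.mul_sum]
      _ ≤ M * n.factorial := Nat.mul_le_mul_left M hsum
  exact Nat.le_of_mul_le_mul_right hkn (Nat.factorial_pos n)

section Lower
variable {U : Type*} [PartialOrder U] [Fintype U] [BoundedOrder U]

omit [Fintype U] [BoundedOrder U] in
lemma sigma_mk_le_mk {k : ℕ} {i j : Fin k} {u v : U}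
    (h : (⟨i, u⟩ : Σ _ : Fin k, U) ≤ ⟨j, v⟩) : i = j := by
  rw [Sigma.le_def] at h
  exact h.1

omit [Fintype U] [BoundedOrder U] in
lemma sigma_mk_le_mk_iff {k : ℕ} {i : Fin k} {u v : U} :
    (⟨i, u⟩ : Σ _ : Fin k, U) ≤ ⟨i, v⟩ ↔ u ≤ v := Sigma.mk_le_mk_iff

lemma lower_bound {k n p : ℕ} (hk : 1 ≤ k)
    (hp : p = sInf {p' : ℕ | Nonempty (U ↪o Set (Fin p'))})
    (g : (Σ _ : Fin k, U) ↪o Set (Fin n)) :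
    p + sInf {m : ℕ | k ≤ m.choose (m / 2)} ≤ n := by
  classical
  -- finset versions of the interval endpoints
  set Af : Fin k → Finset (Fin n) := fun i => (Set.toFinite (g ⟨i, ⊥⟩)).toFinset with hAf
  set Bf : Fin k → Finset (Fin n) := fun i => (Set.toFinite (g ⟨i, ⊤⟩)).toFinset with hBf
  have hbotle : ∀ (i : Fin k) (u : U), g ⟨i, ⊥⟩ ⊆ g ⟨i, u⟩ := fun i u =>
    g.monotone (sigma_mk_le_mk_iff.2 bot_le)
  have htople : ∀ (i : Fin k) (u : U), g ⟨i, u⟩ ⊆ g ⟨i, ⊤⟩ := fun i u =>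
    g.monotone (sigma_mk_le_mk_iff.2 le_top)
  have hAB : ∀ i, Af i ⊆ Bf i := fun i =>
    Set.Finite.toFinset_subset_toFinset.2 (hbotle i ⊤)
  -- each interval has height at least p
  have hpd : ∀ i, p ≤ (Bf i \ Af i).card := by
    intro i
    set S : Set (Fin n) := g ⟨i, ⊤⟩ \ g ⟨i, ⊥⟩ with hS
    letI : Fintype ↥S := (Set.toFinite S).fintype
    have hmem : ∀ x : Fin n, x ∈ Bf i \ Af i ↔ x ∈ S := by
      intro x
      rw [mem_sdiff, hAf, hBf]
      simp only [Set.Finite.mem_toFinset]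
      rfl
    have emb1 : U ↪o Set ↥S := by
      refine OrderEmbedding.ofMapLEIff (fun u => {x : ↥S | ↑x ∈ g ⟨i, u⟩}) ?_
      intro u v
      constructor
      · intro h
        have hsub : g ⟨i, u⟩ ⊆ g ⟨i, v⟩ := by
          intro x hx
          by_cases hxb : x ∈ g ⟨i, ⊥⟩
          · exact hbotle i v hxb
          · have hxS : x ∈ S := ⟨htople i u hx, hxb⟩
            exact h (show (⟨x, hxS⟩ : ↥S) ∈ _ from hx)
        exact sigma_mk_le_mk_iff.1 (g.le_iff_le.1 hsub)
      · intro h x hx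
        exact g.monotone (sigma_mk_le_mk_iff.2 h) hx
    have ecard : Fintype.card ↥S = (Bf i \ Af i).card := by
      rw [← Fintype.card_coe (Bf i \ Af i)]
      exact Fintype.card_congr (Equiv.subtypeEquivRight fun x => (hmem x).symm)
    have emb2 : U ↪o Set (Fin ((Bf i \ Af i).card)) :=
      emb1.trans (setCongrIso (Fintype.equivFinOfCardEq ecard)).toOrderEmbedding
    rw [hp]
    exact Nat.sInf_le ⟨emb2⟩
  -- shrink the intervals to height exactly p
  choose D hD1 hD2 using fun i => Finset.exists_subset_card_eq (s := Bf i \ Af i) (hpd i)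
  set Cf : Fin k → Finset (Fin n) := fun i => Af i ∪ D i with hCf
  have hsub : ∀ i, Af i ⊆ Cf i := fun i => subset_union_left
  have hDdisj : ∀ i, Disjoint (Af i) (D i) := fun i =>
    (disjoint_sdiff.mono_right (hD1 i))
  have hcard : ∀ i, (Cf i \ Af i).card = p := by
    intro i
    rw [hCf]
    simp only []
    rw [union_sdiff_cancel_left (hDdisj i)]
    exact hD2 i
  have hunrel : ∀ i j, i ≠ j → ¬ Af i ⊆ Cf j := by
    intro i j hij hsub'
    have hCB : Cf j ⊆ Bf j := union_subset (hAB j) ((hD1 j).trans sdiff_subset)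
    have h1 : Af i ⊆ Bf j := hsub'.trans hCB
    have h2 : g ⟨i, ⊥⟩ ⊆ g ⟨j, ⊤⟩ := Set.Finite.toFinset_subset_toFinset.1 h1
    have h3 := g.le_iff_le.1 h2
    exact hij (sigma_mk_le_mk h3)
  have hGST := GST Af Cf hsub hcard hunrel
  have hm : sInf {m : ℕ | k ≤ m.choose (m / 2)} ≤ n - p := Nat.sInf_le hGST
  have hpn : p ≤ n := by
    have := hpd ⟨0, hk⟩
    have h2 : (Bf ⟨0, hk⟩ \ Af ⟨0, hk⟩).card ≤ n := by
      calc (Bf ⟨0, hk⟩ \ Af ⟨0, hk⟩).card ≤ (univ : Finset (Fin n)).card :=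
            card_le_card (subset_univ _)
        _ = n := by simp
    omega
  omega

end Lower

section Upper
variable {U : Type*} [PartialOrder U] [Fintype U] [BoundedOrder U]

omit [Fintype U] [BoundedOrder U] in
lemma sum_union_subset_iff {p m : ℕ} (s s' : Set (Fin p)) (t t' : Set (Fin m)) :
    Sum.inl '' s ∪ Sum.inr '' t ⊆ Sum.inl '' s' ∪ Sum.inr '' t' ↔ s ⊆ s' ∧ t ⊆ t' := by
  constructor
  · intro h
    constructor
    · intro x hx
      have := h (Set.mem_union_left _ (Set.mem_image_of_mem _ hx))
      rcases this with h' | h'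
      · obtain ⟨y, hy, hxy⟩ := h'
        exact Sum.inl_injective hxy ▸ hy
      · obtain ⟨y, _, hxy⟩ := h'
        exact absurd hxy (by simp)
    · intro x hx
      have := h (Set.mem_union_right _ (Set.mem_image_of_mem _ hx))
      rcases this with h' | h'
      · obtain ⟨y, _, hxy⟩ := h'
        exact absurd hxy (by simp)
      · obtain ⟨y, hy, hxy⟩ := h'
        exact (Sum.inr_injective hxy) ▸ hy
  · rintro ⟨h1, h2⟩
    exact Set.union_subset_union (Set.image_mono h1) (Set.image_mono h2)

omit [Fintype U] in
lemma upper_bound {k p m : ℕ} (e : U ↪o Set (Fin p)) (hm : k ≤ m.choose (m / 2)) :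
    Nonempty ((Σ _ : Fin k, U) ↪o Set (Fin (p + m))) := by
  classical
  -- an antichain of k subsets of Fin m, each of size m/2
  have hcardT : k ≤ Fintype.card ↥(powersetCard (m / 2) (univ : Finset (Fin m))) := by
    rw [Fintype.card_coe, card_powersetCard, card_univ, Fintype.card_fin]
    exact hm
  obtain ⟨emb⟩ := Function.Embedding.nonempty_of_card_le
    (by rw [Fintype.card_fin]; exact hcardT :
      Fintype.card (Fin k) ≤ Fintype.card ↥(powersetCard (m / 2) (univ : Finset (Fin m))))
  set f : Fin k → Finset (Fin m) := fun i => ↑(emb i) with hf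
  have hfc : ∀ i, (f i).card = m / 2 := fun i => (mem_powersetCard.1 (emb i).2).2
  have hfinj : ∀ i j, f i ⊆ f j → i = j := by
    intro i j hij
    have : f i = f j := eq_of_subset_of_card_le hij (le_of_eq ((hfc j).trans (hfc i).symm))
    exact emb.injective (Subtype.coe_injective this)
  -- the embedding
  set q : Fin p ⊕ Fin m ≃ Fin (p + m) := finSumFinEquiv with hq
  set F : (Σ _ : Fin k, U) → Set (Fin (p + m)) :=
    fun x => q '' (Sum.inl '' (e x.2) ∪ Sum.inr '' ↑(f x.1)) with hF
  refine ⟨OrderEmbedding.ofMapLEIff F ?_⟩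
  rintro ⟨i, u⟩ ⟨j, v⟩
  show F ⟨i, u⟩ ⊆ F ⟨j, v⟩ ↔ _
  rw [hF]
  simp only []
  rw [Set.image_subset_image_iff q.injective, sum_union_subset_iff]
  constructor
  · rintro ⟨h1, h2⟩
    have hij : i = j := hfinj i j (by exact_mod_cast h2)
    subst hij
    exact sigma_mk_le_mk_iff.2 (e.le_iff_le.1 h1)
  · intro h
    have hij : i = j := sigma_mk_le_mk h
    subst hij
    have huv : u ≤ v := sigma_mk_le_mk_iff.1 h
    exact ⟨e.monotone huv, subset_refl _⟩

end Upper

/-- For a finite bounded poset `U` with `p = min {p' : U ↪o P([p'])}` and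
`k ≥ 1`:  `Sp*(U,k) = p + B*(k)`, where `Sp*(U,k)` is the least `n` such that
`k` unrelated copies of `U` embed into `P([n])` and
`B*(k) = min {n : k ≤ C(n, ⌊n/2⌋)}`. -/
theorem stmt_13 (U : Type*) [PartialOrder U] [Fintype U] [Nonempty U]
    [BoundedOrder U]
    (p : ℕ) (hp : p = sInf {p' : ℕ | Nonempty (U ↪o Set (Fin p'))})
    (k : ℕ) (hk : 1 ≤ k) :
    sInf {n : ℕ | Nonempty ((Σ _ : Fin k, U) ↪o Set (Fin n))}
      = p + sInf {n : ℕ | k ≤ n.choose (n / 2)} := by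
  classical
  have hLne : {n : ℕ | Nonempty ((Σ _ : Fin k, U) ↪o Set (Fin n))}.Nonempty :=
    ⟨Fintype.card (Σ _ : Fin k, U), ⟨finEmb _⟩⟩
  have hRne : {n : ℕ | k ≤ n.choose (n / 2)}.Nonempty :=
    ⟨k, le_trans (le_of_eq (Nat.choose_one_right k).symm) (Nat.choose_le_middle 1 k)⟩
  have hUne : {p' : ℕ | Nonempty (U ↪o Set (Fin p'))}.Nonempty :=
    ⟨Fintype.card U, ⟨finEmb U⟩⟩
  obtain ⟨e⟩ : Nonempty (U ↪o Set (Fin p)) := hp ▸ Nat.sInf_mem hUne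
  have hm : k ≤ (sInf {n : ℕ | k ≤ n.choose (n / 2)}).choose
      (sInf {n : ℕ | k ≤ n.choose (n / 2)} / 2) := Nat.sInf_mem hRne
  apply le_antisymm
  · exact Nat.sInf_le (upper_bound e hm)
  · obtain ⟨g⟩ := Nat.sInf_mem hLne
    exact lower_bound hk hp g
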